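/- Let C_n^σ be an oriented cycle on n vertices. Then sr(C_n^σ) = n if C_n^σ is oddly-oriented, sr(C_n^σ) = n - 2 if C_n^σ is evenly-oriented, and sr(C_n^σ) = n - 1 otherwise (i.e., when n is odd). -/

import Mathlib

/-- S is the skew-adjacency matrix of some oriented graph: it is skew-symmetric
with entries in {0, 1, -1}. -/
def IsSkewAdjacency {V : Type} [Fintype V] [DecidableEq V] (S : Matrix V V ℝ) : Prop :=
  S.transpose = -S ∧ ∀ i j : V, S i j = 0 ∨ S i j = 1 ∨ S i j = -1

/-- S is the skew-adjacency matrix of an orientation of the simple graph G. -/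
def IsSkewAdjacencyOf {V : Type} [Fintype V] [DecidableEq V]
    (S : Matrix V V ℝ) (G : SimpleGraph V) : Prop :=
  IsSkewAdjacency S ∧ ∀ i j : V, S i j ≠ 0 ↔ G.Adj i j

/-- The skew-rank of an oriented cycle on n vertices: n if oddly-oriented,
n - 2 if evenly-oriented, and n - 1 otherwise (i.e. when n is odd). -/
theorem skewRank_cycle
    (n : ℕ) [NeZero n] (hn : 3 ≤ n) (S : Matrix (Fin n) (Fin n) ℝ)
    (hS : IsSkewAdjacency S)
    (hadj : ∀ i j : Fin n, S i j ≠ 0 ↔ (j = i + 1 ∨ i = j + 1)) :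
    (Even n → (∏ i : Fin n, S i (i + 1)) < 0 → S.rank = n) ∧
    (Even n → 0 < (∏ i : Fin n, S i (i + 1)) → S.rank = n - 2) ∧
    (Odd n → S.rank = n - 1) := by
  open Fin.NatCast Fin.CommRing in
  obtain ⟨hskew, hval⟩ := hS
  set s : Fin n → ℝ := fun i => S i (i + 1) with hs
  set P : ℝ := ∏ i : Fin n, s i with hPdef
  -- basic facts
  have hSji : ∀ i j : Fin n, S j i = -S i j := by
    intro i j
    have := congrFun (congrFun hskew i) j
    simpa [Matrix.transpose_apply] using this
  have hs_ne : ∀ i, s i ≠ 0 := fun i => (hadj i (i+1)).mpr (Or.inl rfl)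
  have hs_sq : ∀ i, s i * s i = 1 := by
    intro i
    rcases hval i (i+1) with h | h | h
    · exact absurd h (hs_ne i)
    · simp [hs, h]
    · simp [hs, h]
  have h2 : (2 : Fin n) ≠ 0 := by
    have hv : ((2 : ℕ) : Fin n).val = 2 % n := Fin.val_natCast 2 n
    have h2n : 2 % n = 2 := Nat.mod_eq_of_lt (by omega)
    intro h
    have : ((2 : ℕ) : Fin n) = (2 : Fin n) := by push_cast; ring
    rw [this, h] at hv
    simp [h2n] at hv
  have hne : ∀ i : Fin n, i + 1 ≠ i - 1 := by
    intro i h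
    exact h2 (by linear_combination h)
  -- row formula
  have hrow : ∀ (x : Fin n → ℝ) (i : Fin n),
      S.mulVec x i = s i * x (i+1) - s (i-1) * x (i-1) := by
    intro x i
    have hii : i - 1 + 1 = i := sub_add_cancel i 1
    have hS2 : S i (i-1) = - s (i-1) := by
      have h1 := hSji (i-1) i
      have : S (i-1) i = s (i-1) := by
        show S (i-1) i = S (i-1) (i-1+1); rw [hii]
      rw [← this]
      rw [h1, this]
    have hsum : S.mulVec x i = ∑ j ∈ ({i+1, i-1} : Finset (Fin n)), S i j * x j := by
      show ∑ j, S i j * x j = _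
      symm
      apply Finset.sum_subset (Finset.subset_univ _)
      intro j _ hj
      simp only [Finset.mem_insert, Finset.mem_singleton, not_or] at hj
      have h0 : S i j = 0 := by
        by_contra h
        rcases (hadj i j).mp h with h1 | h1
        · exact hj.1 h1
        · exact hj.2 (by rw [h1]; ring)
      simp [h0]
    rw [hsum, Finset.sum_pair (hne i), hS2]
    show s i * x (i+1) + _ = _
    ring
  -- kernel characterization
  have hker : ∀ x : Fin n → ℝ, S.mulVec x = 0 ↔
      ∀ i : Fin n, x (i+1) = s i * (s (i-1) * x (i-1)) := by
    intro x
    constructor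
    · intro h i
      have h0 := congrFun h i
      rw [hrow] at h0
      have h0' : s i * x (i+1) - s (i-1) * x (i-1) = 0 := h0
      linear_combination s i * h0' - x (i + 1) * hs_sq i
    · intro h
      funext i
      rw [hrow]
      show _ = (0 : ℝ)
      linear_combination s i * h i + s (i-1) * x (i-1) * hs_sq i
  -- nat recurrence for kernel vectors
  have hrecN : ∀ x : Fin n → ℝ, (∀ i : Fin n, x (i+1) = s i * (s (i-1) * x (i-1))) →
      ∀ k : ℕ, x ↑(k+2) = s ↑(k+1) * (s ↑k * x ↑k) := by
    intro x hx k
    have := hx (↑(k+1))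
    have e1 : ((k+1 : ℕ) : Fin n) + 1 = ((k+2 : ℕ) : Fin n) := by push_cast; ring
    have e2 : ((k+1 : ℕ) : Fin n) - 1 = ((k : ℕ) : Fin n) := by push_cast; ring
    rw [e1, e2] at this
    exact this
  -- periodicity of casts
  have hper : ∀ (x : Fin n → ℝ) (k : ℕ), x ↑(k+n) = x ↑k := by
    intro x k
    congr 1
    push_cast [Fin.natCast_self]
    ring
  -- partial products
  set W : ℕ → ℝ := fun k => ∏ j ∈ Finset.range k, s ↑j with hWdef
  have hWsucc2 : ∀ k : ℕ, W (k+2) = s ↑(k+1) * (s ↑k * W k) := by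
    intro k
    show ∏ j ∈ Finset.range (k+1+1), s ↑j = _
    rw [Finset.prod_range_succ, Finset.prod_range_succ]
    ring
  have hWn : W n = P := by
    show (∏ j ∈ Finset.range n, s ↑j) = ∏ i : Fin n, s i
    rw [← Fin.prod_univ_eq_prod_range (fun j => s ↑j) n]
    simp [Fin.cast_val_eq_self]
  have hPP : P * P = 1 := by
    rw [hPdef, ← Finset.prod_mul_distrib]
    rw [Finset.prod_congr rfl (fun i _ => hs_sq i)]
    simp
  have hP0 : P ≠ 0 := by
    intro h; rw [h] at hPP; simp at hPP
  -- closed forms on kernel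
  have key : ∀ x : Fin n → ℝ, S.mulVec x = 0 →
      (∀ m : ℕ, x ↑(2*m) = W (2*m) * x 0) ∧
      (∀ m : ℕ, x ↑(2*m+1) = (∏ j ∈ Finset.range (2*m), s ↑(j+1)) * x 1) := by
    intro x hx
    have hrec := hrecN x ((hker x).mp hx)
    constructor
    · intro m
      induction m with
      | zero => simp [hWdef]
      | succ m ih =>
        have e : 2*(m+1) = 2*m + 2 := by ring
        rw [e, hrec (2*m), ih, hWsucc2]
        ring
    · intro m
      induction m with
      | zero => simp
      | succ m ih =>
        have e : 2*(m+1)+1 = (2*m+1) + 2 := by ring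
        rw [e, hrec (2*m+1), ih]
        have e2 : 2*(m+1) = (2*m+1)+1 := by ring
        rw [e2, Finset.prod_range_succ, Finset.prod_range_succ]
        have e3 : (2*m+1+1) = 2*m+2 := by ring
        rw [e3]
        ring
  -- shifted full product
  have hshift : (∏ j ∈ Finset.range n, s ↑(j+1)) = P := by
    have h1 := Finset.prod_range_succ (fun j => (s ↑j : ℝ)) n
    have h2 := Finset.prod_range_succ' (fun j => (s ↑j : ℝ)) n
    have hn0 : ((n : ℕ) : Fin n) = 0 := Fin.natCast_self n
    have h2' : ∏ k ∈ Finset.range (n+1), s ↑k = (∏ j ∈ Finset.range n, s ↑(j+1)) * s 0 := by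
      simpa using h2
    have h1' : ∏ k ∈ Finset.range (n+1), s ↑k = W n * s 0 := by
      rw [h1]
      show (W n) * s ↑(n:ℕ) = W n * s 0
      rw [hn0]
    rw [← hWn]
    exact mul_right_cancel₀ (hs_ne 0) (h2'.symm.trans h1')
  -- zero vector criterion
  have hzero_of : ∀ x : Fin n → ℝ, S.mulVec x = 0 → x 0 = 0 → x 1 = 0 → x = 0 := by
    intro x hx h0 h1
    obtain ⟨keven, kodd⟩ := key x hx
    have hall : ∀ k : ℕ, x ↑k = 0 := by
      intro k
      rcases Nat.even_or_odd k with ⟨m, hm⟩ | ⟨m, hm⟩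
      · have e : k = 2*m := by omega
        rw [e, keven m, h0, mul_zero]
      · have e : k = 2*m+1 := by omega
        rw [e, kodd m, h1, mul_zero]
    funext i
    have := hall i.val
    rwa [Fin.cast_val_eq_self] at this
  -- consistency for even n
  have hcons : ∀ x : Fin n → ℝ, S.mulVec x = 0 → Even n →
      x 0 = P * x 0 ∧ x 1 = P * x 1 := by
    intro x hx ⟨m, hm⟩
    obtain ⟨keven, kodd⟩ := key x hx
    have h2m : 2*m = n := by omega
    constructor
    · have h := keven m
      rw [h2m, hWn] at h
      have : x ((n : ℕ) : Fin n) = x 0 := by rw [Fin.natCast_self]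
      rw [this] at h
      exact h
    · have h := kodd m
      rw [h2m, hshift] at h
      have hx1 : x ↑(n+1) = x ↑(1:ℕ) := by
        have := hper x 1
        rw [Nat.add_comm] at this
        exact this
      rw [hx1] at h
      simpa using h
  -- rank-nullity setup
  have hrn := LinearMap.finrank_range_add_finrank_ker (S.mulVecLin)
  have hdim : Module.finrank ℝ (Fin n → ℝ) = n := by
    simp [Module.finrank_fintype_fun_eq_card]
  rw [hdim] at hrn
  have hrank : S.rank = Module.finrank ℝ (LinearMap.range S.mulVecLin) := rfl
  have hmem : ∀ x : Fin n → ℝ, x ∈ LinearMap.ker S.mulVecLin ↔ S.mulVec x = 0 := by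
    intro x; rw [LinearMap.mem_ker, Matrix.mulVecLin_apply]
  -- periodic mod lemma
  have hmod : ∀ f : ℕ → ℝ, (∀ k, f (k + n) = f k) → ∀ k, f (k % n) = f k := by
    intro f hf k
    induction k using Nat.strong_induction_on with
    | _ k ih =>
      by_cases hk : k < n
      · rw [Nat.mod_eq_of_lt hk]
      · push_neg at hk
        have e : k = (k - n) + n := by omega
        have h1 : k % n = (k - n) % n := by
          conv_lhs => rw [e]
          rw [Nat.add_mod_right]
        calc f (k % n) = f ((k - n) % n) := by rw [h1]
          _ = f (k - n) := ih (k - n) (by omega)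
          _ = f (k - n + n) := (hf (k - n)).symm
          _ = f k := by rw [← e]
  -- building kernel vectors from periodic nat solutions
  have hbuild : ∀ f : ℕ → ℝ, (∀ k, f (k + n) = f k) →
      (∀ k, f (k+2) = s ↑(k+1) * (s ↑k * f k)) →
      S.mulVec (fun i : Fin n => f i.val) = 0 := by
    intro f hfp hfr
    have hx : ∀ k : ℕ, (fun i : Fin n => f i.val) ↑k = f k := by
      intro k
      show f (((k:ℕ) : Fin n)).val = f k
      rw [Fin.val_natCast]
      exact hmod f hfp k
    apply (hker _).mpr
    intro i
    set k := i.val + (n - 1) with hk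
    have hk1 : k + 1 = i.val + n := by omega
    have e1 : ((k+1 : ℕ) : Fin n) = i := by
      rw [hk1]
      push_cast [Fin.natCast_self, Fin.cast_val_eq_self]
      ring
    have e0 : ((k : ℕ) : Fin n) + 1 = ((k+1 : ℕ) : Fin n) := by push_cast; ring
    have e2 : ((k+2 : ℕ) : Fin n) = i + 1 := by
      have h' : ((k+2 : ℕ) : Fin n) = ((k+1:ℕ) : Fin n) + 1 := by push_cast; ring
      rw [h', e1]
    have e3 : ((k : ℕ) : Fin n) = i - 1 := eq_sub_of_add_eq (e0.trans e1)
    have h := hfr k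
    rw [← hx (k+2), ← hx k] at h
    rw [e2, e3, e1] at h
    exact h
  have hv1 : (1 : Fin n).val = 1 := by
    rw [Fin.val_one']
    exact Nat.mod_eq_of_lt (by omega)
  refine ⟨?_, ?_, ?_⟩
  · -- even, P < 0 : rank = n
    intro heven hP
    have hP' : P < 0 := hP
    have hkerbot : LinearMap.ker S.mulVecLin = ⊥ := by
      rw [eq_bot_iff]
      intro x hx
      have hx0 : S.mulVec x = 0 := (hmem x).mp hx
      obtain ⟨hc0, hc1⟩ := hcons x hx0 heven
      have h0 : x 0 = 0 := by
        rcases mul_eq_zero.mp (show x 0 * (1 - P) = 0 by linear_combination hc0) with h | h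
        · exact h
        · exfalso; linarith
      have h1 : x 1 = 0 := by
        rcases mul_eq_zero.mp (show x 1 * (1 - P) = 0 by linear_combination hc1) with h | h
        · exact h
        · exfalso; linarith
      have := hzero_of x hx0 h0 h1
      simp [this, Submodule.mem_bot]
    rw [hkerbot, finrank_bot] at hrn
    rw [hrank]
    omega
  · -- even, P > 0 : rank = n - 2
    intro heven hP
    have hP' : (0:ℝ) < P := hP
    have hP1 : P = 1 := by
      rcases mul_self_eq_one_iff.mp hPP with h | h
      · exact h
      · exfalso; rw [h] at hP'; linarith
    -- window products
    have hwin : ∀ k : ℕ, (∏ j ∈ Finset.range n, s ↑(k+j)) = P := by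
      intro k
      rw [hPdef]
      rw [← Fin.prod_univ_eq_prod_range (fun j => s ↑(k+j)) n]
      have he : ∀ i : Fin n, s ↑(k + i.val) = s ((k : Fin n) + i) := by
        intro i
        congr 1
        push_cast [Fin.cast_val_eq_self]
        ring
      rw [Finset.prod_congr rfl (fun i _ => he i)]
      simpa using Equiv.prod_comp (Equiv.addLeft (k : Fin n)) s
    have hWper : ∀ k, W (k + n) = W k := by
      intro k
      show (∏ j ∈ Finset.range (k+n), s ↑j) = W k
      rw [Finset.prod_range_add, hwin k, hP1, mul_one]
    have hIcoP : ∀ k : ℕ, (∏ j ∈ Finset.Ico k (k+n), s ↑j) = 1 := by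
      intro k
      rw [Finset.prod_Ico_eq_prod_range]
      have e : k + n - k = n := by omega
      rw [e, hwin k, hP1]
    -- the two kernel vectors
    set fe : ℕ → ℝ := fun k => if Even k then W k else 0 with hfe
    set fo : ℕ → ℝ := fun k => if Even k then 0 else ∏ j ∈ Finset.Ico 1 k, s ↑j with hfo
    have hpar : ∀ k : ℕ, Even (k + n) ↔ Even k := by
      intro k
      simp [Nat.even_add, heven]
    have hfe_per : ∀ k, fe (k + n) = fe k := by
      intro k
      show (if Even (k+n) then W (k+n) else 0) = (if Even k then W k else 0)
      by_cases hk : Even k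
      · rw [if_pos ((hpar k).mpr hk), if_pos hk, hWper]
      · rw [if_neg (fun h => hk ((hpar k).mp h)), if_neg hk]
    have hpar2 : ∀ k : ℕ, Even (k+2) ↔ Even k := by
      intro k
      constructor
      · rintro ⟨a, ha⟩; exact ⟨a-1, by omega⟩
      · rintro ⟨a, ha⟩; exact ⟨a+1, by omega⟩
    have hfe_rec : ∀ k, fe (k+2) = s ↑(k+1) * (s ↑k * fe k) := by
      intro k
      show (if Even (k+2) then W (k+2) else 0) = s ↑(k+1) * (s ↑k * (if Even k then W k else 0))
      by_cases hk : Even k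
      · rw [if_pos ((hpar2 k).mpr hk), if_pos hk, hWsucc2]
      · rw [if_neg (fun h => hk ((hpar2 k).mp h)), if_neg hk]
        ring
    have hfo_per : ∀ k, fo (k + n) = fo k := by
      intro k
      show (if Even (k+n) then 0 else ∏ j ∈ Finset.Ico 1 (k+n), s ↑j)
          = (if Even k then 0 else ∏ j ∈ Finset.Ico 1 k, s ↑j)
      by_cases hk : Even k
      · rw [if_pos ((hpar k).mpr hk), if_pos hk]
      · rw [if_neg (fun h => hk ((hpar k).mp h)), if_neg hk]
        have h1 : 1 ≤ k := by
          rcases Nat.even_or_odd k with h | h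
          · exact absurd h hk
          · rcases h with ⟨a, ha⟩; omega
        rw [← Finset.prod_Ico_consecutive (fun j => s ↑j) h1 (Nat.le_add_right k n)]
        rw [hIcoP k, mul_one]
    have hfo_rec : ∀ k, fo (k+2) = s ↑(k+1) * (s ↑k * fo k) := by
      intro k
      show (if Even (k+2) then 0 else ∏ j ∈ Finset.Ico 1 (k+2), s ↑j)
          = s ↑(k+1) * (s ↑k * (if Even k then 0 else ∏ j ∈ Finset.Ico 1 k, s ↑j))
      by_cases hk : Even k
      · rw [if_pos ((hpar2 k).mpr hk), if_pos hk]
        ring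
      · rw [if_neg (fun h => hk ((hpar2 k).mp h)), if_neg hk]
        have h1 : 1 ≤ k := by
          rcases Nat.even_or_odd k with h | h
          · exact absurd h hk
          · rcases h with ⟨a, ha⟩; omega
        rw [Finset.prod_Ico_succ_top (by omega : 1 ≤ k+1), Finset.prod_Ico_succ_top h1]
        ring
    set xe : Fin n → ℝ := fun i : Fin n => fe i.val with hxe_def
    set xo : Fin n → ℝ := fun i : Fin n => fo i.val with hxo_def
    have hxe : S.mulVec xe = 0 := hbuild fe hfe_per hfe_rec
    have hxo : S.mulVec xo = 0 := hbuild fo hfo_per hfo_rec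
    have hxe0 : xe 0 = 1 := by
      show (if Even ((0:Fin n)).val then W ((0:Fin n)).val else 0) = 1
      rw [Fin.val_zero]
      simp [hWdef]
    have hxe1 : xe 1 = 0 := by
      show (if Even ((1:Fin n)).val then W ((1:Fin n)).val else 0) = 0
      rw [hv1]
      simp
    have hxo0 : xo 0 = 0 := by
      show (if Even ((0:Fin n)).val then 0 else ∏ j ∈ Finset.Ico 1 ((0:Fin n)).val, s ↑j) = 0
      rw [Fin.val_zero]
      simp
    have hxo1 : xo 1 = 1 := by
      show (if Even ((1:Fin n)).val then 0 else ∏ j ∈ Finset.Ico 1 ((1:Fin n)).val, s ↑j) = 1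
      rw [hv1]
      simp
    have li : LinearIndependent ℝ ![xe, xo] := by
      rw [LinearIndependent.pair_iff]
      intro a b hab
      have h0 := congrFun hab 0
      have h1 := congrFun hab 1
      simp only [Pi.add_apply, Pi.smul_apply, smul_eq_mul, Pi.zero_apply,
        hxe0, hxe1, hxo0, hxo1, mul_one, mul_zero, add_zero, zero_add] at h0 h1
      exact ⟨h0, h1⟩
    have hle : Submodule.span ℝ (Set.range ![xe, xo]) ≤ LinearMap.ker S.mulVecLin := by
      rw [Submodule.span_le]
      rintro y ⟨i, rfl⟩
      fin_cases i
      · simpa using (hmem xe).mpr hxe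
      · simpa using (hmem xo).mpr hxo
    have hlow : 2 ≤ Module.finrank ℝ (LinearMap.ker S.mulVecLin) := by
      have h := Submodule.finrank_mono hle
      rw [finrank_span_eq_card li] at h
      simpa using h
    have hup : Module.finrank ℝ (LinearMap.ker S.mulVecLin) ≤ 2 := by
      have hinj : Function.Injective
          (((LinearMap.proj (R := ℝ) (φ := fun _ : Fin n => ℝ) 0).prod
            (LinearMap.proj (R := ℝ) (φ := fun _ : Fin n => ℝ) 1)).comp
            (LinearMap.ker S.mulVecLin).subtype) := by
        intro a b hab
        apply Subtype.ext
        have hsub : (a : Fin n → ℝ) - b ∈ LinearMap.ker S.mulVecLin := sub_mem a.2 b.2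
        have hab' : ((a : Fin n → ℝ) 0, (a : Fin n → ℝ) 1)
            = ((b : Fin n → ℝ) 0, (b : Fin n → ℝ) 1) := hab
        have h0 : ((a : Fin n → ℝ) - b) 0 = 0 := by
          have := congrArg Prod.fst hab'
          simp only [Pi.sub_apply]
          simp at this
          simp [this]
        have h1 : ((a : Fin n → ℝ) - b) 1 = 0 := by
          have := congrArg Prod.snd hab'
          simp only [Pi.sub_apply]
          simp at this
          simp [this]
        have := hzero_of _ ((hmem _).mp hsub) h0 h1
        exact sub_eq_zero.mp this
      have h := LinearMap.finrank_le_finrank_of_injective hinj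
      simpa using h
    have hker2 : Module.finrank ℝ (LinearMap.ker S.mulVecLin) = 2 := le_antisymm hup hlow
    rw [hker2] at hrn
    rw [hrank]
    omega
  · -- odd : rank = n - 1
    intro hodd
    have hdet : S.det = 0 := by
      have h1 : S.det = ((-1:ℝ))^(Fintype.card (Fin n)) * S.det := by
        conv_lhs => rw [← Matrix.det_transpose S, hskew, Matrix.det_neg]
      rw [Fintype.card_fin, Odd.neg_one_pow hodd] at h1
      linarith
    obtain ⟨v, hv0, hv⟩ := Matrix.exists_mulVec_eq_zero_iff.mpr hdet
    have hodd01 : ∀ x : Fin n → ℝ, S.mulVec x = 0 → x 0 = 0 → x = 0 := by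
      intro x hx h0
      obtain ⟨m, hm⟩ := hodd
      have h := (key x hx).1 (m+1)
      have e : 2*(m+1) = 1 + n := by omega
      rw [e, hper x 1] at h
      have h1 : x 1 = 0 := by
        have hc : x ((1:ℕ) : Fin n) = x 1 := by norm_num
        rw [hc, h0, mul_zero] at h
        exact h
      exact hzero_of x hx h0 h1
    have hlow : 0 < Module.finrank ℝ (LinearMap.ker S.mulVecLin) := by
      apply Module.finrank_pos_iff.mpr
      refine ⟨⟨⟨v, (hmem v).mpr hv⟩, 0, ?_⟩⟩
      simp [Subtype.ext_iff, hv0]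
    have hup : Module.finrank ℝ (LinearMap.ker S.mulVecLin) ≤ 1 := by
      have hinj : Function.Injective
          ((LinearMap.proj (R := ℝ) (φ := fun _ : Fin n => ℝ) 0).comp
            (LinearMap.ker S.mulVecLin).subtype) := by
        intro a b hab
        apply Subtype.ext
        have hsub : (a : Fin n → ℝ) - b ∈ LinearMap.ker S.mulVecLin := sub_mem a.2 b.2
        have h0 : ((a : Fin n → ℝ) - b) 0 = 0 := by
          have : (a : Fin n → ℝ) 0 = (b : Fin n → ℝ) 0 := hab
          simp [Pi.sub_apply, this]
        have := hodd01 _ ((hmem _).mp hsub) h0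
        exact sub_eq_zero.mp this
      have := LinearMap.finrank_le_finrank_of_injective hinj
      simpa using this
    have hker1 : Module.finrank ℝ (LinearMap.ker S.mulVecLin) = 1 := by omega
    rw [hker1] at hrn
    rw [hrank]
    omega
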